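/- Let a, b, c be real constants with b ≥ 2c, c ≥ 0 and a > b + c. Then for all v ∈ ℝ and all r ≥ 0: a − b·tanh(v) + 2·c·v·tanh(r)·exp(−v²) > 0. -/
import Mathlib

lemma aux_abs_tanh_le_one (x : ℝ) : |Real.tanh x| ≤ 1 := by
  rw [Real.tanh_eq_sinh_div_cosh, abs_div, abs_of_pos (Real.cosh_pos x),
    div_le_one (Real.cosh_pos x)]
  nlinarith [Real.cosh_sq x, Real.cosh_pos x, sq_abs (Real.sinh x), abs_nonneg (Real.sinh x)]

lemma aux_tanh_nonneg {x : ℝ} (hx : 0 ≤ x) : 0 ≤ Real.tanh x := by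
  rw [Real.tanh_eq_sinh_div_cosh]
  exact div_nonneg (Real.sinh_nonneg_iff.mpr hx) (Real.cosh_pos x).le

lemma aux_abs_mul_exp (v : ℝ) : |v| * Real.exp (-v^2) ≤ 1/2 := by
  have h1 : (1 : ℝ) + v^2 ≤ Real.exp (v^2) := by linarith [Real.add_one_le_exp (v^2)]
  have h2 : Real.exp (-v^2) = 1 / Real.exp (v^2) := by
    rw [Real.exp_neg]; ring
  have h3 : 0 < Real.exp (v^2) := Real.exp_pos _
  rw [h2]
  rw [mul_one_div, div_le_div_iff₀ h3 (by norm_num : (0:ℝ) < 2)]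
  nlinarith [sq_abs v, sq_nonneg (|v| - 1), abs_nonneg v]

/-- positivity of `∂_v H` for the example jump function:
if `b ≥ 2c`, `c ≥ 0`, `a > b + c`, then
`a - b tanh v + 2cv tanh r e^{-v²} > 0` for all `v ∈ ℝ`, `r ≥ 0`. -/
theorem stmt_12 (a b c : ℝ) (h1 : 2 * c ≤ b) (h2 : 0 ≤ c) (h3 : b + c < a) :
    ∀ v r : ℝ, 0 ≤ r →
      0 < a - b * Real.tanh v + 2 * c * v * Real.tanh r * Real.exp (-v^2) := by
  intro v r hr
  have hb : 0 ≤ b := le_trans (by linarith) h1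
  have htv : |Real.tanh v| ≤ 1 := aux_abs_tanh_le_one v
  have htr0 : 0 ≤ Real.tanh r := aux_tanh_nonneg hr
  have htr1 : Real.tanh r ≤ 1 := le_of_abs_le (aux_abs_tanh_le_one r)
  have hE : |2 * c * v * Real.tanh r * Real.exp (-v^2)| ≤ c := by
    have : |2 * c * v * Real.tanh r * Real.exp (-v^2)|
        = 2 * c * Real.tanh r * (|v| * Real.exp (-v^2)) := by
      rw [abs_mul, abs_mul, abs_mul, abs_of_nonneg (Real.exp_pos _).le,
        abs_of_nonneg htr0, abs_of_nonneg (by linarith : (0:ℝ) ≤ 2 * c)]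
      ring
    rw [this]
    have hm := aux_abs_mul_exp v
    have hM0 : 0 ≤ |v| * Real.exp (-v^2) :=
      mul_nonneg (abs_nonneg v) (Real.exp_pos _).le
    have key : Real.tanh r * (|v| * Real.exp (-v^2)) ≤ 1/2 := by
      nlinarith
    nlinarith [mul_le_mul_of_nonneg_left key (by linarith : (0:ℝ) ≤ 2*c)]
  have h1' := abs_le.mp htv
  have h2' := abs_le.mp hE
  nlinarith [h1'.1, h1'.2, h2'.1, h2'.2]
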